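/- Let 𝕍 be a horizontal homogeneous subgroup of ℍⁿ with vertical complement 𝕍^⊥ = V^⊥ × ℝ, and equip 𝕍^⊥ with the Euclidean metric of ℝ^{2n+1}. Then the projection π_{𝕍^⊥} : ℍⁿ → (𝕍^⊥, d_{ℝ^{2n+1}}) given by p = p_{𝕍^⊥} * p_𝕍 is locally David–Semmes (dim V + 1)-regular: it is Lipschitz on compact sets (from the Korányi metric to the Euclidean metric), and for every compact K ⊆ ℍⁿ there are C ≥ 1, r₀ > 0 such that for every Euclidean ball B ⊆ 𝕍^⊥ of radius r < r₀, π_{𝕍^⊥}⁻¹(B) ∩ K can be covered by at most C·r^{−(dim V + 1)} Korányi balls of radius C·r. -/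

import Mathlib

open Metric
open scoped ENNReal NNReal

/-- The underlying space of the `n`-th Heisenberg group `ℍⁿ = ℝ^{2n} × ℝ`. -/
abbrev Heis (n : ℕ) := EuclideanSpace ℝ (Fin (2 * n)) × ℝ

/-- The standard symplectic form `ω(x,y) = ∑ᵢ (x_{n+i} yᵢ − xᵢ y_{n+i})` on `ℝ^{2n}`. -/
def symp (n : ℕ) (x y : EuclideanSpace ℝ (Fin (2 * n))) : ℝ :=
  ∑ i : Fin n,
    (x ⟨n + i.1, by have := i.isLt; omega⟩ * y ⟨i.1, by have := i.isLt; omega⟩ -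
      x ⟨i.1, by have := i.isLt; omega⟩ * y ⟨n + i.1, by have := i.isLt; omega⟩)

/-- The Heisenberg group law `(x,t)*(x',t') = (x+x', t+t'+2ω(x,x'))`. -/
def hmul {n : ℕ} (p q : Heis n) : Heis n :=
  (p.1 + q.1, p.2 + q.2 + 2 * symp n p.1 q.1)

/-- The Heisenberg group inverse. -/
def hinv {n : ℕ} (p : Heis n) : Heis n := (-p.1, -p.2)

/-- The Korányi norm `‖(x,t)‖ = (‖x‖⁴ + t²)^{1/4}`. -/
noncomputable def knorm {n : ℕ} (p : Heis n) : ℝ :=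
  (‖p.1‖ ^ 4 + p.2 ^ 2) ^ ((1 : ℝ) / 4)

/-- The Korányi metric `d(p,q) = ‖p⁻¹ * q‖`. -/
noncomputable def kdist {n : ℕ} (p q : Heis n) : ℝ := knorm (hmul (hinv p) q)

/-- The horizontal subgroup `𝕍 = V × {0}` determined by a subspace `V ⊆ ℝ^{2n}`. -/
def horizSub (n : ℕ) (V : Submodule ℝ (EuclideanSpace ℝ (Fin (2 * n)))) : Set (Heis n) :=
  {p : Heis n | p.1 ∈ V ∧ p.2 = 0}

/-- The projection `π_𝕍 : ℍⁿ → 𝕍` induced by the splitting `p = p_{𝕍^⊥} * p_𝕍`;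
explicitly `π_𝕍(p) = (P_V p₁, 0)` with `P_V` the Euclidean orthogonal projection. -/
noncomputable def projHoriz (n : ℕ) (V : Submodule ℝ (EuclideanSpace ℝ (Fin (2 * n))))
    [CompleteSpace V] (p : Heis n) : Heis n :=
  ((V.orthogonalProjectionOnto p.1 : EuclideanSpace ℝ (Fin (2 * n))), 0)

/-- The vertical complement `𝕍^⊥ = V^⊥ × ℝ` of a horizontal subgroup. -/
def vertSub (n : ℕ) (V : Submodule ℝ (EuclideanSpace ℝ (Fin (2 * n)))) : Set (Heis n) :=
  {p : Heis n | p.1 ∈ Vᗮ}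

/-- The projection `π_{𝕍^⊥} : ℍⁿ → 𝕍^⊥` from the splitting `p = p_{𝕍^⊥} * p_𝕍`,
i.e. `π_{𝕍^⊥}(p) = p * (π_𝕍 p)⁻¹`. -/
noncomputable def projVert (n : ℕ) (V : Submodule ℝ (EuclideanSpace ℝ (Fin (2 * n))))
    [CompleteSpace V] (p : Heis n) : Heis n :=
  hmul p (hinv (projHoriz n V p))

/-- The Euclidean distance on `ℍⁿ = ℝ^{2n+1}`. -/
noncomputable def eudist {n : ℕ} (p q : Heis n) : ℝ :=
  Real.sqrt (‖p.1 - q.1‖ ^ 2 + (p.2 - q.2) ^ 2)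

lemma symp_self (n : ℕ) (x : EuclideanSpace ℝ (Fin (2 * n))) : symp n x x = 0 := by
  simp only [symp]
  apply Finset.sum_eq_zero
  intro i _
  ring

lemma symp_swap (n : ℕ) (x y : EuclideanSpace ℝ (Fin (2 * n))) : symp n x y = - symp n y x := by
  simp only [symp, ← Finset.sum_neg_distrib]
  exact Finset.sum_congr rfl fun i _ => by ring

lemma symp_add_left (n : ℕ) (x y z : EuclideanSpace ℝ (Fin (2 * n))) :
    symp n (x + y) z = symp n x z + symp n y z := by
  simp only [symp, ← Finset.sum_add_distrib, PiLp.add_apply]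
  exact Finset.sum_congr rfl fun i _ => by ring

lemma symp_add_right (n : ℕ) (x y z : EuclideanSpace ℝ (Fin (2 * n))) :
    symp n x (y + z) = symp n x y + symp n x z := by
  simp only [symp, ← Finset.sum_add_distrib, PiLp.add_apply]
  exact Finset.sum_congr rfl fun i _ => by ring

lemma symp_neg_left (n : ℕ) (x y : EuclideanSpace ℝ (Fin (2 * n))) :
    symp n (-x) y = - symp n x y := by
  simp only [symp, ← Finset.sum_neg_distrib, PiLp.neg_apply]
  exact Finset.sum_congr rfl fun i _ => by ring

lemma symp_neg_right (n : ℕ) (x y : EuclideanSpace ℝ (Fin (2 * n))) :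
    symp n x (-y) = - symp n x y := by
  simp only [symp, ← Finset.sum_neg_distrib, PiLp.neg_apply]
  exact Finset.sum_congr rfl fun i _ => by ring

lemma symp_sub_left (n : ℕ) (x y z : EuclideanSpace ℝ (Fin (2 * n))) :
    symp n (x - y) z = symp n x z - symp n y z := by
  rw [sub_eq_add_neg, symp_add_left, symp_neg_left]; ring

lemma symp_sub_right (n : ℕ) (x y z : EuclideanSpace ℝ (Fin (2 * n))) :
    symp n x (y - z) = symp n x y - symp n x z := by
  rw [sub_eq_add_neg, symp_add_right, symp_neg_right]; ring

lemma coord_abs_le_norm {m : ℕ} (x : EuclideanSpace ℝ (Fin m)) (j : Fin m) : |x j| ≤ ‖x‖ := by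
  rw [EuclideanSpace.norm_eq, ← Real.sqrt_sq_eq_abs]
  apply Real.sqrt_le_sqrt
  have : (x j) ^ 2 = ‖x j‖ ^ 2 := by simp [Real.norm_eq_abs, sq_abs]
  rw [this]
  exact Finset.single_le_sum (f := fun i => ‖x i‖ ^ 2) (fun i _ => by positivity)
    (Finset.mem_univ j)

lemma symp_abs_le (n : ℕ) (x y : EuclideanSpace ℝ (Fin (2 * n))) :
    |symp n x y| ≤ 2 * n * (‖x‖ * ‖y‖) := by
  calc |symp n x y| ≤ ∑ i : Fin n, |(x ⟨n + i.1, by have := i.isLt; omega⟩ *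
        y ⟨i.1, by have := i.isLt; omega⟩ -
        x ⟨i.1, by have := i.isLt; omega⟩ * y ⟨n + i.1, by have := i.isLt; omega⟩)| :=
      Finset.abs_sum_le_sum_abs _ _
    _ ≤ ∑ _i : Fin n, 2 * (‖x‖ * ‖y‖) := by
      apply Finset.sum_le_sum
      intro i _
      have h1 := coord_abs_le_norm x ⟨n + i.1, by have := i.isLt; omega⟩
      have h2 := coord_abs_le_norm y ⟨i.1, by have := i.isLt; omega⟩
      have h3 := coord_abs_le_norm x ⟨i.1, by have := i.isLt; omega⟩
      have h4 := coord_abs_le_norm y ⟨n + i.1, by have := i.isLt; omega⟩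
      have hx : (0:ℝ) ≤ ‖x‖ := norm_nonneg _
      have hy : (0:ℝ) ≤ ‖y‖ := norm_nonneg _
      calc |_| ≤ |x ⟨n + i.1, by have := i.isLt; omega⟩| * |y ⟨i.1, by have := i.isLt; omega⟩| +
            |x ⟨i.1, by have := i.isLt; omega⟩| * |y ⟨n + i.1, by have := i.isLt; omega⟩| := by
            rw [← abs_mul, ← abs_mul]; exact abs_sub _ _
        _ ≤ ‖x‖ * ‖y‖ + ‖x‖ * ‖y‖ := by
            gcongr <;> first | exact abs_nonneg _ | assumption
        _ = 2 * (‖x‖ * ‖y‖) := by ring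
    _ = 2 * n * (‖x‖ * ‖y‖) := by
      rw [Finset.sum_const, Finset.card_univ, Fintype.card_fin]; push_cast; ring

lemma knorm_nonneg {n : ℕ} (p : Heis n) : 0 ≤ knorm p :=
  Real.rpow_nonneg (by positivity) _

lemma knorm_pow_four {n : ℕ} (p : Heis n) : knorm p ^ 4 = ‖p.1‖ ^ 4 + p.2 ^ 2 := by
  have h : (0:ℝ) ≤ ‖p.1‖ ^ 4 + p.2 ^ 2 := by positivity
  rw [knorm, ← Real.rpow_natCast (_ ^ ((1:ℝ)/4)) 4, ← Real.rpow_mul h]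
  norm_num

lemma knorm_lt_of {n : ℕ} (p : Heis n) (A : ℝ) (hA : 0 < A)
    (h : ‖p.1‖ ^ 4 + p.2 ^ 2 < A ^ 4) : knorm p < A := by
  have h4 := knorm_pow_four p
  exact (pow_lt_pow_iff_left₀ (knorm_nonneg p) hA.le (by norm_num : (4:ℕ) ≠ 0)).1 (by linarith)

lemma knorm_le_of {n : ℕ} (p : Heis n) (A : ℝ) (hA : 0 ≤ A)
    (h : ‖p.1‖ ^ 4 + p.2 ^ 2 ≤ A ^ 4) : knorm p ≤ A := by
  have h4 := knorm_pow_four p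
  exact (pow_le_pow_iff_left₀ (knorm_nonneg p) hA (by norm_num : (4:ℕ) ≠ 0)).1 (by linarith)

lemma fst_norm_le_knorm {n : ℕ} (p : Heis n) : ‖p.1‖ ≤ knorm p := by
  have h4 := knorm_pow_four p
  exact (pow_le_pow_iff_left₀ (norm_nonneg _) (knorm_nonneg p) (by norm_num : (4:ℕ) ≠ 0)).1
    (by nlinarith [sq_nonneg p.2])

lemma snd_abs_le_knorm_sq {n : ℕ} (p : Heis n) : |p.2| ≤ knorm p ^ 2 := by
  have h4 := knorm_pow_four p
  have hr : (knorm p ^ 2) ^ 2 = knorm p ^ 4 := by ring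
  have h : p.2 ^ 2 ≤ (knorm p ^ 2) ^ 2 := by
    rw [hr, h4]; nlinarith [pow_nonneg (norm_nonneg p.1) 4]
  calc |p.2| = Real.sqrt (p.2 ^ 2) := (Real.sqrt_sq_eq_abs _).symm
    _ ≤ Real.sqrt ((knorm p ^ 2) ^ 2) := Real.sqrt_le_sqrt h
    _ = |knorm p ^ 2| := Real.sqrt_sq_eq_abs _
    _ = knorm p ^ 2 := abs_of_nonneg (by positivity)

lemma kdist_eq {n : ℕ} (p q : Heis n) :
    kdist p q = knorm (q.1 - p.1, q.2 - p.2 - 2 * symp n p.1 q.1) := by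
  have h1 : (hmul (hinv p) q).1 = q.1 - p.1 := by
    simp [hmul, hinv]; abel
  have h2 : (hmul (hinv p) q).2 = q.2 - p.2 - 2 * symp n p.1 q.1 := by
    simp [hmul, hinv, symp_neg_left]; ring
  rw [kdist, show hmul (hinv p) q = (q.1 - p.1, q.2 - p.2 - 2 * symp n p.1 q.1) from
    Prod.ext h1 h2]

lemma eudist_le {n : ℕ} (p q : Heis n) : eudist p q ≤ ‖p.1 - q.1‖ + |p.2 - q.2| := by
  rw [eudist]
  have h : ‖p.1 - q.1‖ ^ 2 + (p.2 - q.2) ^ 2 ≤ (‖p.1 - q.1‖ + |p.2 - q.2|) ^ 2 := by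
    nlinarith [norm_nonneg (p.1 - q.1), abs_nonneg (p.2 - q.2), sq_abs (p.2 - q.2),
      mul_nonneg (norm_nonneg (p.1 - q.1)) (abs_nonneg (p.2 - q.2))]
  have h2 : Real.sqrt ((‖p.1 - q.1‖ + |p.2 - q.2|) ^ 2) = ‖p.1 - q.1‖ + |p.2 - q.2| :=
    Real.sqrt_sq (by positivity)
  calc Real.sqrt _ ≤ Real.sqrt ((‖p.1 - q.1‖ + |p.2 - q.2|) ^ 2) := Real.sqrt_le_sqrt h
    _ = _ := h2

lemma fst_le_eudist {n : ℕ} (p q : Heis n) : ‖p.1 - q.1‖ ≤ eudist p q := by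
  have h := Real.sqrt_le_sqrt (show ‖p.1 - q.1‖ ^ 2 ≤ ‖p.1 - q.1‖ ^ 2 + (p.2 - q.2) ^ 2 by
    nlinarith [sq_nonneg (p.2 - q.2)])
  rwa [Real.sqrt_sq (norm_nonneg _)] at h

lemma snd_le_eudist {n : ℕ} (p q : Heis n) : |p.2 - q.2| ≤ eudist p q := by
  have h := Real.sqrt_le_sqrt (show (p.2 - q.2) ^ 2 ≤ ‖p.1 - q.1‖ ^ 2 + (p.2 - q.2) ^ 2 by
    nlinarith [sq_nonneg ‖p.1 - q.1‖])
  rwa [Real.sqrt_sq_eq_abs] at h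

lemma exists_grid {F : Type*} [NormedAddCommGroup F] [InnerProductSpace ℝ F] {m : ℕ}
    (B : OrthonormalBasis (Fin m) ℝ F) (δ : ℝ) (hδ : 0 < δ) (w : F) :
    ∃ c : Fin m → ℤ, (∀ i, |(c i : ℝ)| ≤ ‖w‖ / δ + 1 / 2) ∧
      ‖w - ∑ i, ((c i : ℝ) * δ) • B i‖ ≤ ((m : ℝ) + 1) * δ := by
  set u : EuclideanSpace ℝ (Fin m) := B.repr w with hu
  refine ⟨fun i => round (u i / δ), fun i => ?_, ?_⟩
  · have h1 : |((round (u i / δ) : ℤ) : ℝ)| ≤ |u i / δ| + 1 / 2 := by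
      have := abs_sub_round (u i / δ)
      calc |((round (u i / δ) : ℤ) : ℝ)| = |u i / δ - (u i / δ - round (u i / δ))| := by
            congr 1; ring
        _ ≤ |u i / δ| + |u i / δ - round (u i / δ)| := abs_sub _ _
        _ ≤ |u i / δ| + 1 / 2 := by linarith
    refine h1.trans ?_
    have h2 : |u i| ≤ ‖w‖ := by
      have : ‖u‖ = ‖w‖ := B.repr.norm_map w
      rw [← this]; exact coord_abs_le_norm u i
    rw [abs_div, abs_of_pos hδ]
    gcongr
  · set c : Fin m → ℤ := fun i => round (u i / δ) with hc
    set v : EuclideanSpace ℝ (Fin m) := (WithLp.equiv 2 _).symm (fun i => ((c i : ℝ) * δ)) with hv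
    have hg : ∑ i, ((c i : ℝ) * δ) • B i = B.repr.symm v := by
      rw [← B.sum_repr_symm]
      rfl
    have heq : ‖w - ∑ i, ((c i : ℝ) * δ) • B i‖ = ‖u - v‖ := by
      rw [hg, ← B.repr.norm_map (w - B.repr.symm v), map_sub, ← hu,
        LinearIsometryEquiv.apply_symm_apply]
    rw [heq]
    have hcoord : ∀ i, ‖(u - v) i‖ ≤ δ / 2 := by
      intro i
      have hvi : v i = (c i : ℝ) * δ := rfl
      have hdiff : (u - v) i = (u i / δ - round (u i / δ)) * δ := by
        simp only [PiLp.sub_apply, hvi, hc]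
        field_simp
      rw [hdiff, Real.norm_eq_abs, abs_mul, abs_of_pos hδ]
      have := abs_sub_round (u i / δ)
      nlinarith
    have hb : ‖u - v‖ ≤ Real.sqrt ((m : ℝ) * (δ / 2) ^ 2) := by
      rw [EuclideanSpace.norm_eq]
      apply Real.sqrt_le_sqrt
      calc ∑ i, ‖(u - v) i‖ ^ 2 ≤ ∑ _i : Fin m, (δ / 2) ^ 2 := by
            apply Finset.sum_le_sum
            intro i _
            exact pow_le_pow_left₀ (norm_nonneg _) (hcoord i) 2
        _ = (m : ℝ) * (δ / 2) ^ 2 := by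
            rw [Finset.sum_const, Finset.card_univ, Fintype.card_fin, nsmul_eq_mul]
    refine hb.trans ?_
    rw [show ((m : ℝ) + 1) * δ = Real.sqrt ((((m : ℝ) + 1) * δ) ^ 2) from
      (Real.sqrt_sq (by positivity)).symm]
    apply Real.sqrt_le_sqrt
    have hm : (0:ℝ) ≤ (m : ℝ) := Nat.cast_nonneg m
    nlinarith [sq_nonneg δ, mul_pos hδ hδ]

lemma add_pow_four_bound {a b : ℝ} (ha : 0 ≤ a) (hb : 1 ≤ b) : a ^ 4 + b ^ 2 ≤ (a + b) ^ 4 := by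
  have hb0 : (0:ℝ) ≤ b := le_trans zero_le_one hb
  have k1 : b ^ 2 ≤ b ^ 4 := by
    have hb2 : 1 ≤ b ^ 2 := one_le_pow₀ hb
    have h := mul_le_mul_of_nonneg_left hb2 (sq_nonneg b)
    have e : b ^ 4 = b ^ 2 * b ^ 2 := by ring
    linarith
  have k2 : a ^ 4 + b ^ 4 ≤ (a + b) ^ 4 := by
    have m1 : 0 ≤ a ^ 3 * b := by positivity
    have m2 : 0 ≤ a ^ 2 * b ^ 2 := by positivity
    have m3 : 0 ≤ a * b ^ 3 := by positivity
    have e : (a + b) ^ 4 = a ^ 4 + b ^ 4 + (4 * (a ^ 3 * b) + 6 * (a ^ 2 * b ^ 2)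
        + 4 * (a * b ^ 3)) := by ring
    linarith
  linarith

lemma sq_le_of_abs_le {x b : ℝ} (h : |x| ≤ b) : x ^ 2 ≤ b ^ 2 := by
  nlinarith [abs_nonneg x, sq_abs x]

lemma projVert_eq (n : ℕ) (V : Submodule ℝ (EuclideanSpace ℝ (Fin (2 * n)))) [CompleteSpace V]
    (p : Heis n) :
    projVert n V p =
      (p.1 - ((V.orthogonalProjectionOnto p.1 : V) : EuclideanSpace ℝ (Fin (2 * n))),
       p.2 - 2 * symp n p.1 ((V.orthogonalProjectionOnto p.1 : V) : EuclideanSpace ℝ (Fin (2 * n)))) := by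
  unfold projVert projHoriz hmul hinv
  refine Prod.ext ?_ ?_
  · simp [sub_eq_add_neg]
  · simp only [symp_neg_right]
    ring

lemma proj_norm_le (n : ℕ) (V : Submodule ℝ (EuclideanSpace ℝ (Fin (2 * n)))) [CompleteSpace V]
    (x : EuclideanSpace ℝ (Fin (2 * n))) :
    ‖((V.orthogonalProjectionOnto x : V) : EuclideanSpace ℝ (Fin (2 * n)))‖ ≤ ‖x‖ := by
  rw [Submodule.norm_coe]
  calc ‖V.orthogonalProjectionOnto x‖ ≤ ‖V.orthogonalProjectionOnto‖ * ‖x‖ :=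
        (V.orthogonalProjectionOnto).le_opNorm x
    _ ≤ 1 * ‖x‖ := mul_le_mul_of_nonneg_right (Submodule.orthogonalProjectionOnto_norm_le V) (norm_nonneg x)
    _ = ‖x‖ := one_mul _

lemma compact_bound {n : ℕ} {K : Set (Heis n)} (hK : IsCompact K) :
    ∃ M : ℝ, 1 ≤ M ∧ ∀ p ∈ K, ‖p.1‖ ≤ M ∧ |p.2| ≤ M := by
  obtain ⟨ρ, hρ⟩ := hK.isBounded.subset_closedBall 0
  refine ⟨max ρ 1, le_max_right _ _, fun p hp => ?_⟩
  have h := hρ hp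
  rw [Metric.mem_closedBall, dist_zero_right] at h
  have h1 : ‖p.1‖ ≤ ‖p‖ := norm_fst_le p
  have h2 : ‖p.2‖ ≤ ‖p‖ := norm_snd_le p
  rw [Real.norm_eq_abs] at h2
  exact ⟨le_trans h1 (le_trans h (le_max_left _ _)), le_trans h2 (le_trans h (le_max_left _ _))⟩

set_option maxHeartbeats 8000000 in
/-- The projection of `ℍⁿ` onto the vertical complement `𝕍^⊥` of a horizontal subgroup,
with `𝕍^⊥` equipped with the Euclidean metric, is locally David–Semmes
`(dim V + 1)`-regular: Lipschitz on compact sets from the Korányi to the Euclidean metric,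
and preimages of Euclidean balls of radius `r` in `𝕍^⊥` intersected with a compact set can
be covered by `≤ C r^{-(dim V + 1)}` Korányi balls of radius `Cr`. -/
theorem projVert_DSregular (n : ℕ) (hn : 0 < n)
    (V : Submodule ℝ (EuclideanSpace ℝ (Fin (2 * n))))
    (hiso : ∀ x ∈ V, ∀ y ∈ V, symp n x y = 0) :
    (∀ K : Set (Heis n), IsCompact K → ∃ L : ℝ, 0 ≤ L ∧
      ∀ p ∈ K, ∀ q ∈ K, eudist (projVert n V p) (projVert n V q) ≤ L * kdist p q) ∧
    ∀ K : Set (Heis n), IsCompact K → ∃ C : ℝ, 1 ≤ C ∧ ∃ r₀ : ℝ, 0 < r₀ ∧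
      ∀ a ∈ vertSub n V, ∀ r : ℝ, 0 < r → r < r₀ →
        ∃ T : Finset (Heis n),
          (T.card : ℝ) ≤ C * r ^ (-((Module.finrank ℝ V : ℝ) + 1)) ∧
          projVert n V ⁻¹' {b | b ∈ vertSub n V ∧ eudist a b < r} ∩ K ⊆
            ⋃ x ∈ T, {q : Heis n | kdist x q < C * r} := by
  constructor
  · -- Lipschitz part
    intro K hK
    obtain ⟨M, hM1, hM⟩ := compact_bound hK
    have hM0 : (0:ℝ) ≤ M := by linarith
    have hn0 : (0:ℝ) ≤ (n:ℝ) := Nat.cast_nonneg n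
    set D : ℝ := 4*M + 4*(n:ℝ)*M^2 with hD
    refine ⟨2 + D + 12*(n:ℝ)*M, by positivity, ?_⟩
    intro p hp q hq
    set d := kdist p q with hdd
    have hd0 : 0 ≤ d := knorm_nonneg _
    have hkd := kdist_eq p q
    have h1 : ‖q.1 - p.1‖ ≤ d := by
      rw [hdd, hkd]
      exact fst_norm_le_knorm (n := n) (q.1 - p.1, q.2 - p.2 - 2 * symp n p.1 q.1)
    have h2 : |q.2 - p.2 - 2 * symp n p.1 q.1| ≤ d^2 := by
      rw [hdd, hkd]
      have := snd_abs_le_knorm_sq (n := n) (q.1 - p.1, q.2 - p.2 - 2 * symp n p.1 q.1)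
      exact this
    have hpM := hM p hp
    have hqM := hM q hq
    -- d ≤ D
    have hzn : ‖q.1 - p.1‖ ≤ 2*M := by
      calc ‖q.1 - p.1‖ ≤ ‖q.1‖ + ‖p.1‖ := norm_sub_le _ _
        _ ≤ 2*M := by linarith [hpM.1, hqM.1]
    have hz2 : |q.2 - p.2 - 2 * symp n p.1 q.1| ≤ 2*M + 4*(n:ℝ)*M^2 := by
      have hs := symp_abs_le n p.1 q.1
      have hsb : 2*(n:ℝ)*(‖p.1‖*‖q.1‖) ≤ 2*(n:ℝ)*(M*M) :=
        mul_le_mul_of_nonneg_left (mul_le_mul hpM.1 hqM.1 (norm_nonneg _) hM0) (by positivity)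
      calc |q.2 - p.2 - 2 * symp n p.1 q.1| ≤ |q.2 - p.2| + |2 * symp n p.1 q.1| := abs_sub _ _
        _ ≤ (|q.2| + |p.2|) + 2*|symp n p.1 q.1| := by
            have := abs_sub q.2 p.2
            rw [abs_mul, abs_two]
            linarith
        _ ≤ 2*M + 4*(n:ℝ)*M^2 := by linarith [hpM.2, hqM.2]
    have hdD : d ≤ D := by
      rw [hdd, hkd]
      apply knorm_le_of _ _ (by positivity)
      have ha : (0:ℝ) ≤ 2*M := by linarith
      have hb1 : (1:ℝ) ≤ 2*M + 4*(n:ℝ)*M^2 := by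
        have : (0:ℝ) ≤ 4*(n:ℝ)*M^2 := by positivity
        linarith
      have hb0 : (0:ℝ) ≤ 2*M + 4*(n:ℝ)*M^2 := by linarith
      have key : (2*M)^4 + (2*M+4*(n:ℝ)*M^2)^2 ≤ D^4 := by
        have hD' : D = (2*M) + (2*M + 4*(n:ℝ)*M^2) := by rw [hD]; ring
        rw [hD']
        exact add_pow_four_bound ha hb1
      have e1 : ‖q.1 - p.1‖^4 ≤ (2*M)^4 := pow_le_pow_left₀ (norm_nonneg _) hzn 4
      have e2 : (q.2 - p.2 - 2*symp n p.1 q.1)^2 ≤ (2*M+4*(n:ℝ)*M^2)^2 := sq_le_of_abs_le hz2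
      calc ‖(q.1 - p.1, q.2 - p.2 - 2 * symp n p.1 q.1).1‖^4 +
            (q.1 - p.1, q.2 - p.2 - 2 * symp n p.1 q.1).2^2
          = ‖q.1 - p.1‖^4 + (q.2 - p.2 - 2*symp n p.1 q.1)^2 := rfl
        _ ≤ (2*M)^4 + (2*M+4*(n:ℝ)*M^2)^2 := by linarith
        _ ≤ D^4 := key
    -- set up projections
    set vp := ((V.orthogonalProjectionOnto p.1 : V) : EuclideanSpace ℝ (Fin (2 * n))) with hvp
    set vq := ((V.orthogonalProjectionOnto q.1 : V) : EuclideanSpace ℝ (Fin (2 * n))) with hvq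
    have hsub : vq - vp =
        ((V.orthogonalProjectionOnto (q.1 - p.1) : V) : EuclideanSpace ℝ (Fin (2 * n))) := by
      rw [hvq, hvp, map_sub]
      push_cast
      ring
    have hnsub : ‖vq - vp‖ ≤ d := by
      rw [hsub]; exact le_trans (proj_norm_le n V _) h1
    have hnvq : ‖vq‖ ≤ M := le_trans (proj_norm_le n V _) hqM.1
    rw [projVert_eq n V p, projVert_eq n V q]
    refine le_trans (eudist_le _ _) ?_
    have hX : ‖(p.1 - vp) - (q.1 - vq)‖ ≤ 2*d := by
      calc ‖(p.1 - vp) - (q.1 - vq)‖ = ‖(vq - vp) - (q.1 - p.1)‖ := by congr 1; abel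
        _ ≤ ‖vq - vp‖ + ‖q.1 - p.1‖ := norm_sub_le _ _
        _ ≤ 2*d := by linarith
    have hY : (p.2 - 2*symp n p.1 vp) - (q.2 - 2*symp n q.1 vq)
        = -((q.2 - p.2 - 2*symp n p.1 q.1) + 2*symp n p.1 (q.1-p.1)
            - 2*symp n (q.1-p.1) vq - 2*symp n p.1 (vq - vp)) := by
      simp only [symp_sub_left, symp_sub_right]
      have := symp_self n p.1
      linarith
    have s1 := symp_abs_le n p.1 (q.1 - p.1)
    have s2 := symp_abs_le n (q.1 - p.1) vq
    have s3 := symp_abs_le n p.1 (vq - vp)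
    have sb1 : 2*(n:ℝ)*(‖p.1‖*‖q.1-p.1‖) ≤ 2*(n:ℝ)*(M*d) :=
      mul_le_mul_of_nonneg_left (mul_le_mul hpM.1 h1 (norm_nonneg _) hM0) (by positivity)
    have sb2 : 2*(n:ℝ)*(‖q.1-p.1‖*‖vq‖) ≤ 2*(n:ℝ)*(d*M) :=
      mul_le_mul_of_nonneg_left (mul_le_mul h1 hnvq (norm_nonneg _) hd0) (by positivity)
    have sb3 : 2*(n:ℝ)*(‖p.1‖*‖vq-vp‖) ≤ 2*(n:ℝ)*(M*d) :=
      mul_le_mul_of_nonneg_left (mul_le_mul hpM.1 hnsub (norm_nonneg _) hM0) (by positivity)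
    have hYb : |(p.2 - 2*symp n p.1 vp) - (q.2 - 2*symp n q.1 vq)| ≤ d^2 + 12*(n:ℝ)*M*d := by
      rw [hY, abs_neg]
      have t1 : |(q.2 - p.2 - 2*symp n p.1 q.1) + 2*symp n p.1 (q.1-p.1)
            - 2*symp n (q.1-p.1) vq - 2*symp n p.1 (vq - vp)|
          ≤ |(q.2 - p.2 - 2*symp n p.1 q.1) + 2*symp n p.1 (q.1-p.1) - 2*symp n (q.1-p.1) vq|
            + |2*symp n p.1 (vq - vp)| := abs_sub _ _
      have t2 : |(q.2 - p.2 - 2*symp n p.1 q.1) + 2*symp n p.1 (q.1-p.1) - 2*symp n (q.1-p.1) vq|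
          ≤ |(q.2 - p.2 - 2*symp n p.1 q.1) + 2*symp n p.1 (q.1-p.1)|
            + |2*symp n (q.1-p.1) vq| := abs_sub _ _
      have t3 : |(q.2 - p.2 - 2*symp n p.1 q.1) + 2*symp n p.1 (q.1-p.1)|
          ≤ |q.2 - p.2 - 2*symp n p.1 q.1| + |2*symp n p.1 (q.1-p.1)| := abs_add_le _ _
      have u1 : |2*symp n p.1 (q.1-p.1)| ≤ 4*(n:ℝ)*M*d := by
        rw [abs_mul, abs_two]; linarith
      have u2 : |2*symp n (q.1-p.1) vq| ≤ 4*(n:ℝ)*M*d := by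
        rw [abs_mul, abs_two]; linarith
      have u3 : |2*symp n p.1 (vq - vp)| ≤ 4*(n:ℝ)*M*d := by
        rw [abs_mul, abs_two]; linarith
      linarith
    have hd2 : d^2 ≤ D*d := by
      rw [pow_two]
      exact mul_le_mul_of_nonneg_right hdD hd0
    calc ‖(p.1 - vp, p.2 - 2*symp n p.1 vp).1 - (q.1 - vq, q.2 - 2*symp n q.1 vq).1‖
          + |(p.1 - vp, p.2 - 2*symp n p.1 vp).2 - (q.1 - vq, q.2 - 2*symp n q.1 vq).2|
        = ‖(p.1 - vp) - (q.1 - vq)‖ + |(p.2 - 2*symp n p.1 vp) - (q.2 - 2*symp n q.1 vq)| := rfl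
      _ ≤ 2*d + (d^2 + 12*(n:ℝ)*M*d) := by linarith
      _ ≤ (2 + D + 12*(n:ℝ)*M) * d := by linarith
  · -- covering part
    intro K hK
    classical
    obtain ⟨M, hM1, hM⟩ := compact_bound hK
    have hM0 : (0:ℝ) ≤ M := by linarith
    have hn0 : (0:ℝ) ≤ (n:ℝ) := Nat.cast_nonneg n
    obtain ⟨m, hm⟩ : ∃ m, Module.finrank ℝ V = m := ⟨_, rfl⟩
    rw [hm]
    have hm0 : (0:ℝ) ≤ (m:ℝ) := Nat.cast_nonneg m
    set R : ℝ := 2*M + 1 with hR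
    set C₄ : ℝ := 1 + 4*(n:ℝ)*R + 4*(n:ℝ)*(2*M + (m:ℝ) + 1) with hC₄
    have hC₄0 : (0:ℝ) ≤ C₄ := by positivity
    set Cc : ℝ := (2*M+5)^m * (2*C₄+5) + ((m:ℝ) + 3) with hCc
    have hCcprod : (0:ℝ) ≤ (2*M+5)^m * (2*C₄+5) := by positivity
    have hCc1 : (1:ℝ) ≤ Cc := by rw [hCc]; linarith
    have hCcm3 : (m:ℝ) + 3 ≤ Cc := by rw [hCc]; linarith
    refine ⟨Cc, hCc1, 1, one_pos, ?_⟩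
    intro a ha r hr hr1
    have hrpow_eq : r ^ (-((m:ℝ)+1)) = (r ^ (m+1))⁻¹ := by
      rw [show -((m:ℝ)+1) = -(((m+1:ℕ)):ℝ) by push_cast; ring, Real.rpow_neg hr.le,
        Real.rpow_natCast]
    have hrpownn : (0:ℝ) ≤ r ^ (-((m:ℝ)+1)) := by
      rw [hrpow_eq]; positivity
    by_cases hne : (projVert n V ⁻¹' {b | b ∈ vertSub n V ∧ eudist a b < r} ∩ K).Nonempty
    swap
    · refine ⟨∅, ?_, ?_⟩
      · simp only [Finset.card_empty, Nat.cast_zero]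
        exact mul_nonneg (by linarith) hrpownn
      · rw [Set.not_nonempty_iff_eq_empty] at hne
        rw [hne]
        simp
    obtain ⟨q₀, hq₀⟩ := hne
    -- bound on ‖a.1‖
    have haR : ‖a.1‖ ≤ R := by
      have h1 : eudist a (projVert n V q₀) < r := hq₀.1.2
      have h2 : ‖a.1 - (projVert n V q₀).1‖ ≤ eudist a (projVert n V q₀) :=
        fst_le_eudist a (projVert n V q₀)
      have h3 : (projVert n V q₀).1 =
          q₀.1 - ((V.orthogonalProjectionOnto q₀.1 : V) : EuclideanSpace ℝ (Fin (2 * n))) := by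
        rw [projVert_eq]
      have h4 : ‖(projVert n V q₀).1‖ ≤ 2*M := by
        rw [h3]
        have h5 := proj_norm_le n V q₀.1
        have h6 := (hM q₀ hq₀.2).1
        calc ‖q₀.1 - ((V.orthogonalProjectionOnto q₀.1 : V) : EuclideanSpace ℝ (Fin (2 * n)))‖
            ≤ ‖q₀.1‖ + ‖((V.orthogonalProjectionOnto q₀.1 : V) : EuclideanSpace ℝ (Fin (2 * n)))‖ :=
              norm_sub_le _ _
          _ ≤ 2*M := by linarith
      calc ‖a.1‖ = ‖(a.1 - (projVert n V q₀).1) + (projVert n V q₀).1‖ := by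
            rw [sub_add_cancel]
        _ ≤ ‖a.1 - (projVert n V q₀).1‖ + ‖(projVert n V q₀).1‖ := norm_add_le _ _
        _ ≤ R := by rw [hR]; linarith
    -- the grid
    set B : OrthonormalBasis (Fin m) ℝ V := (stdOrthonormalBasis ℝ V).reindex (finCongr hm)
      with hB
    set N : ℤ := ⌈M / r⌉ + 1 with hN
    set Kk : ℤ := ⌈C₄ / r⌉ + 1 with hKk
    have hN0 : (0:ℤ) ≤ N := by
      have : (0:ℤ) ≤ ⌈M / r⌉ := Int.ceil_nonneg (div_nonneg hM0 hr.le)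
      rw [hN]; linarith
    have hK0 : (0:ℤ) ≤ Kk := by
      have : (0:ℤ) ≤ ⌈C₄ / r⌉ := Int.ceil_nonneg (div_nonneg hC₄0 hr.le)
      rw [hKk]; linarith
    set f : (Fin m → ℤ) × ℤ → Heis n := fun ck =>
      (a.1 + ((∑ i, ((ck.1 i : ℝ) * r) • B i : V) : EuclideanSpace ℝ (Fin (2 * n))),
       a.2 + (ck.2 : ℝ) * r^2 +
         2 * symp n a.1 ((∑ i, ((ck.1 i : ℝ) * r) • B i : V) : EuclideanSpace ℝ (Fin (2 * n))))
      with hf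
    refine ⟨Finset.image f ((Fintype.piFinset fun _ : Fin m => Finset.Icc (-N) N) ×ˢ
      Finset.Icc (-Kk) Kk), ?_, ?_⟩
    · -- cardinality bound
      have hIcc : ∀ L : ℤ, 0 ≤ L → ((Finset.Icc (-L) L).card : ℝ) = 2*(L:ℝ)+1 := by
        intro L hL
        rw [Int.card_Icc]
        have h1 : L + 1 - -L = 2*L + 1 := by ring
        rw [h1]
        have h2 : (((2*L+1).toNat : ℤ) : ℝ) = ((2*L+1 : ℤ) : ℝ) := by
          rw [Int.toNat_of_nonneg (by linarith)]
        push_cast at h2 ⊢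
        linarith
      have hcard := Finset.card_image_le (f := f)
        (s := (Fintype.piFinset fun _ : Fin m => Finset.Icc (-N) N) ×ˢ Finset.Icc (-Kk) Kk)
      rw [Finset.card_product, Fintype.card_piFinset] at hcard
      have hprod : ∏ _i : Fin m, (Finset.Icc (-N) N).card = (Finset.Icc (-N) N).card ^ m := by
        rw [Finset.prod_const, Finset.card_univ, Fintype.card_fin]
      rw [hprod] at hcard
      have hNr : (2*(N:ℝ)+1) ≤ (2*M+5)/r := by
        have h1 : (⌈M/r⌉ : ℝ) < M/r + 1 := Int.ceil_lt_add_one _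
        have h2 : (N:ℝ) < M/r + 2 := by rw [hN]; push_cast; linarith
        rw [le_div_iff₀ hr]
        have h3 : (N:ℝ) * r < (M/r + 2) * r := mul_lt_mul_of_pos_right h2 hr
        have h4 : (M/r + 2) * r = M + 2*r := by field_simp
        linarith
      have hKr : (2*(Kk:ℝ)+1) ≤ (2*C₄+5)/r := by
        have h1 : (⌈C₄/r⌉ : ℝ) < C₄/r + 1 := Int.ceil_lt_add_one _
        have h2 : (Kk:ℝ) < C₄/r + 2 := by rw [hKk]; push_cast; linarith
        rw [le_div_iff₀ hr]
        have h3 : (Kk:ℝ) * r < (C₄/r + 2) * r := mul_lt_mul_of_pos_right h2 hr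
        have h4 : (C₄/r + 2) * r = C₄ + 2*r := by field_simp
        linarith
      have hN0' : (0:ℝ) ≤ (N:ℝ) := by exact_mod_cast hN0
      have hK0' : (0:ℝ) ≤ (Kk:ℝ) := by exact_mod_cast hK0
      calc ((Finset.image f ((Fintype.piFinset fun _ : Fin m => Finset.Icc (-N) N) ×ˢ
          Finset.Icc (-Kk) Kk)).card : ℝ)
          ≤ ((Finset.Icc (-N) N).card : ℝ) ^ m * ((Finset.Icc (-Kk) Kk).card : ℝ) := by
            exact_mod_cast hcard
        _ = (2*(N:ℝ)+1) ^ m * (2*(Kk:ℝ)+1) := by rw [hIcc N hN0, hIcc Kk hK0]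
        _ ≤ ((2*M+5)/r)^m * ((2*C₄+5)/r) := by
            apply mul_le_mul (pow_le_pow_left₀ (by linarith) hNr m) hKr (by linarith)
            positivity
        _ = ((2*M+5)^m * (2*C₄+5)) * (r^(m+1))⁻¹ := by
            rw [div_pow]
            field_simp
            ring
        _ ≤ Cc * r ^ (-((m:ℝ)+1)) := by
            rw [hrpow_eq]
            apply mul_le_mul_of_nonneg_right _ (by positivity)
            rw [hCc]; linarith
    · -- covering
      intro q hq
      obtain ⟨hqpre, hqK⟩ := hq
      obtain ⟨-, hab⟩ := hqpre
      set wv : V := V.orthogonalProjectionOnto q.1 with hwv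
      set wE := (wv : EuclideanSpace ℝ (Fin (2 * n))) with hwE
      have hwEV : wE ∈ V := SetLike.coe_mem wv
      have hwM : ‖wE‖ ≤ M := le_trans (proj_norm_le n V q.1) (hM q hqK).1
      set b := projVert n V q with hbdef
      have hb1 : b.1 = q.1 - wE := by rw [hbdef, projVert_eq]
      have hb2 : b.2 = q.2 - 2 * symp n q.1 wE := by rw [hbdef, projVert_eq]
      have hba1 : ‖b.1 - a.1‖ < r := by
        have h1 : ‖a.1 - b.1‖ ≤ eudist a b := fst_le_eudist a b
        rw [norm_sub_rev]
        exact lt_of_le_of_lt h1 hab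
      have hba2 : |b.2 - a.2| < r := by
        have h1 : |a.2 - b.2| ≤ eudist a b := snd_le_eudist a b
        rw [abs_sub_comm]
        exact lt_of_le_of_lt h1 hab
      obtain ⟨c, hc1, hc2⟩ := exists_grid B r hr wv
      set g := ((∑ i, ((c i : ℝ) * r) • B i : V) : EuclideanSpace ℝ (Fin (2 * n))) with hg
      have hgV : g ∈ V := SetLike.coe_mem _
      have hwg : ‖wE - g‖ ≤ ((m:ℝ)+1) * r := by
        have hcoe : wE - g = ((wv - ∑ i, ((c i : ℝ) * r) • B i : V) :
            EuclideanSpace ℝ (Fin (2 * n))) := by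
          rw [Submodule.coe_sub]
        rw [hcoe, Submodule.norm_coe]
        exact hc2
      have hgM : ‖g‖ ≤ M + ((m:ℝ)+1) * r := by
        calc ‖g‖ = ‖wE - (wE - g)‖ := by congr 1; abel
          _ ≤ ‖wE‖ + ‖wE - g‖ := norm_sub_le _ _
          _ ≤ M + ((m:ℝ)+1) * r := by linarith
      set τ : ℝ := b.2 - 2 * symp n a.1 (b.1 - a.1) + 2 * symp n (b.1 - a.1) (wE + g) with hτ
      set k : ℤ := round ((τ - a.2)/r^2) with hk
      have hr2 : (0:ℝ) < r^2 := by positivity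
      have hk1 : |τ - a.2 - (k:ℝ)*r^2| ≤ r^2/2 := by
        have h := abs_sub_round ((τ - a.2)/r^2)
        have heq : τ - a.2 - (k:ℝ)*r^2 = ((τ - a.2)/r^2 - (k:ℝ)) * r^2 := by
          rw [hk]; field_simp
        rw [heq, abs_mul, abs_of_pos hr2]
        rw [hk]
        have h2 := mul_le_mul_of_nonneg_right h hr2.le
        linarith
      have hτb : |τ - a.2| ≤ C₄ * r := by
        have e2 := symp_abs_le n a.1 (b.1 - a.1)
        have e3 := symp_abs_le n (b.1 - a.1) (wE + g)
        have e4 : ‖wE + g‖ ≤ 2*M + (m:ℝ) + 1 := by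
          have h5 := norm_add_le wE g
          have h6 : ((m:ℝ)+1)*r ≤ ((m:ℝ)+1)*1 :=
            mul_le_mul_of_nonneg_left hr1.le (by positivity)
          linarith
        have e5 : 2*(n:ℝ)*(‖a.1‖*‖b.1-a.1‖) ≤ 2*(n:ℝ)*(R*r) := by
          apply mul_le_mul_of_nonneg_left _ (by positivity)
          apply mul_le_mul haR hba1.le (norm_nonneg _) (by rw [hR]; linarith)
        have e6 : 2*(n:ℝ)*(‖b.1-a.1‖*‖wE+g‖) ≤ 2*(n:ℝ)*(r*(2*M+(m:ℝ)+1)) := by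
          apply mul_le_mul_of_nonneg_left _ (by positivity)
          apply mul_le_mul hba1.le e4 (norm_nonneg _) hr.le
        have t1 : |τ - a.2| ≤ |b.2 - a.2| + 2*|symp n a.1 (b.1-a.1)| +
            2*|symp n (b.1-a.1) (wE+g)| := by
          rw [hτ]
          have u1 : |b.2 - 2 * symp n a.1 (b.1 - a.1) + 2 * symp n (b.1 - a.1) (wE + g) - a.2|
              ≤ |b.2 - a.2 - 2 * symp n a.1 (b.1 - a.1)| + |2 * symp n (b.1 - a.1) (wE + g)| := by
            have := abs_add_le (b.2 - a.2 - 2 * symp n a.1 (b.1 - a.1))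
              (2 * symp n (b.1 - a.1) (wE + g))
            calc |b.2 - 2 * symp n a.1 (b.1 - a.1) + 2 * symp n (b.1 - a.1) (wE + g) - a.2|
                = |(b.2 - a.2 - 2 * symp n a.1 (b.1 - a.1)) + 2 * symp n (b.1 - a.1) (wE + g)| := by
                  congr 1; ring
              _ ≤ _ := this
          have u2 : |b.2 - a.2 - 2 * symp n a.1 (b.1 - a.1)| ≤ |b.2 - a.2| +
              |2 * symp n a.1 (b.1 - a.1)| := abs_sub _ _
          have v1 : |2 * symp n a.1 (b.1 - a.1)| = 2 * |symp n a.1 (b.1 - a.1)| := by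
            rw [abs_mul, abs_two]
          have v2 : |2 * symp n (b.1 - a.1) (wE + g)| = 2 * |symp n (b.1 - a.1) (wE + g)| := by
            rw [abs_mul, abs_two]
          linarith
        calc |τ - a.2| ≤ |b.2 - a.2| + 2*|symp n a.1 (b.1-a.1)| +
              2*|symp n (b.1-a.1) (wE+g)| := t1
          _ ≤ r + 2*(2*(n:ℝ)*(R*r)) + 2*(2*(n:ℝ)*(r*(2*M+(m:ℝ)+1))) := by
              have := hba2.le
              linarith
          _ = C₄ * r := by rw [hC₄]; ring
      have hkK : k ∈ Finset.Icc (-Kk) Kk := by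
        rw [Finset.mem_Icc, ← abs_le]
        have h1 : |(k:ℝ)| ≤ C₄/r + 1 := by
          have h2 := abs_sub_round ((τ - a.2)/r^2)
          have h3 : |(k:ℝ)| ≤ |(τ - a.2)/r^2| + 1/2 := by
            rw [hk]
            calc |((round ((τ - a.2)/r^2) : ℤ) : ℝ)|
                = |(τ - a.2)/r^2 - ((τ - a.2)/r^2 - round ((τ - a.2)/r^2))| := by congr 1; ring
              _ ≤ |(τ - a.2)/r^2| + |(τ - a.2)/r^2 - round ((τ - a.2)/r^2)| := abs_sub _ _
              _ ≤ _ := by linarith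
          have h4 : |(τ - a.2)/r^2| ≤ C₄/r := by
            rw [abs_div, abs_of_pos hr2, div_le_div_iff₀ hr2 hr]
            calc |τ - a.2| * r ≤ (C₄ * r) * r := by
                  apply mul_le_mul_of_nonneg_right hτb hr.le
              _ = C₄ * r^2 := by ring
          linarith
        have h5 : ((|k| : ℤ) : ℝ) ≤ (Kk : ℝ) := by
          rw [Int.cast_abs]
          have h6 : C₄/r + 1 ≤ (Kk:ℝ) := by
            rw [hKk]
            push_cast
            linarith [Int.le_ceil (C₄/r)]
          linarith
        exact_mod_cast h5
      have hcN : ∀ i, c i ∈ Finset.Icc (-N) N := by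
        intro i
        rw [Finset.mem_Icc, ← abs_le]
        have h1 : |(c i : ℝ)| ≤ ‖wv‖/r + 1/2 := hc1 i
        have h2 : ‖wv‖ ≤ M := by rw [Submodule.coe_norm]; exact hwM
        have h3 : ‖wv‖/r ≤ M/r := by gcongr
        have h4 : M/r + 1 ≤ (N:ℝ) := by
          rw [hN]; push_cast; linarith [Int.le_ceil (M/r)]
        have h5 : ((|c i| : ℤ) : ℝ) ≤ (N:ℝ) := by rw [Int.cast_abs]; linarith
        exact_mod_cast h5
      apply Set.mem_iUnion₂.2
      refine ⟨f (c, k), Finset.mem_image_of_mem f (Finset.mem_product.2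
        ⟨Fintype.mem_piFinset.2 hcN, hkK⟩), ?_⟩
      show kdist (f (c, k)) q < Cc * r
      have hx1 : (f (c, k)).1 = a.1 + g := by rw [hf]
      have hx2 : (f (c, k)).2 = a.2 + (k:ℝ)*r^2 + 2*symp n a.1 g := by rw [hf]
      rw [kdist_eq]
      apply knorm_lt_of _ _ (mul_pos (lt_of_lt_of_le one_pos hCc1) hr)
      have hq1 : q.1 = b.1 + wE := by rw [hb1]; abel
      have hq2 : q.2 = b.2 + 2 * symp n q.1 wE := by rw [hb2]; ring
      have hfst : ‖q.1 - (f (c, k)).1‖ < ((m:ℝ)+2) * r := by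
        have heq : q.1 - (f (c, k)).1 = (b.1 - a.1) + (wE - g) := by
          rw [hx1, hq1]; abel
        rw [heq]
        calc ‖(b.1 - a.1) + (wE - g)‖ ≤ ‖b.1 - a.1‖ + ‖wE - g‖ := norm_add_le _ _
          _ < r + ((m:ℝ)+1)*r := by linarith
          _ = ((m:ℝ)+2)*r := by ring
      have hsnd : q.2 - (f (c, k)).2 - 2 * symp n (f (c, k)).1 q.1 = τ - a.2 - (k:ℝ)*r^2 := by
        rw [hx1, hx2, hτ, hq2, hq1]
        simp only [symp_add_left, symp_add_right, symp_sub_left, symp_sub_right]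
        have i1 : symp n wE wE = 0 := hiso wE hwEV wE hwEV
        have i2 : symp n wE g = 0 := hiso wE hwEV g hgV
        have i3 : symp n g wE = 0 := hiso g hgV wE hwEV
        have i4 : symp n g g = 0 := hiso g hgV g hgV
        have i5 : symp n a.1 a.1 = 0 := symp_self n a.1
        have i6 : symp n g b.1 = - symp n b.1 g := symp_swap n g b.1
        linarith
      have hsb : |q.2 - (f (c, k)).2 - 2 * symp n (f (c, k)).1 q.1| ≤ r^2 := by
        rw [hsnd]; have := hk1; linarith
      have h4 : ‖q.1 - (f (c, k)).1‖^4 < (((m:ℝ)+2)*r)^4 :=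
        pow_lt_pow_left₀ hfst (norm_nonneg _) (by norm_num)
      have h5 : (q.2 - (f (c, k)).2 - 2 * symp n (f (c, k)).1 q.1)^2 ≤ (r^2)^2 :=
        sq_le_of_abs_le hsb
      have hC4' : (((m:ℝ)+2))^4 + 1 ≤ Cc^4 := by
        have g1 : ((m:ℝ)+3)^4 ≤ Cc^4 := pow_le_pow_left₀ (by linarith) hCcm3 4
        have g2 : ((m:ℝ)+2)^4 + 1 ≤ ((m:ℝ)+3)^4 := by
          have e : ((m:ℝ)+3)^4 - ((m:ℝ)+2)^4 - 1
              = 4*(m:ℝ)^3 + 30*(m:ℝ)^2 + 76*(m:ℝ) + 64 := by ring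
          linarith [pow_nonneg hm0 3, sq_nonneg ((m:ℝ)), hm0]
        linarith
      have hkey : (((m:ℝ)+2)*r)^4 + (r^2)^2 ≤ (Cc * r)^4 := by
        have e1 : (((m:ℝ)+2)*r)^4 = ((m:ℝ)+2)^4 * r^4 := by ring
        have e2 : (Cc * r)^4 = Cc^4 * r^4 := by ring
        have e3 : (r^2)^2 = 1 * r^4 := by ring
        have g3 := mul_le_mul_of_nonneg_right hC4' (pow_nonneg hr.le 4)
        have e4 : (((m:ℝ)+2)^4 + 1) * r^4 = ((m:ℝ)+2)^4 * r^4 + 1 * r^4 := by ring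
        rw [e1, e2, e3]
        linarith
      calc ‖(q.1 - (f (c,k)).1, q.2 - (f (c,k)).2 - 2 * symp n (f (c,k)).1 q.1).1‖^4
            + (q.1 - (f (c,k)).1, q.2 - (f (c,k)).2 - 2 * symp n (f (c,k)).1 q.1).2^2
          = ‖q.1 - (f (c,k)).1‖^4 + (q.2 - (f (c,k)).2 - 2 * symp n (f (c,k)).1 q.1)^2 := rfl
        _ < (((m:ℝ)+2)*r)^4 + (r^2)^2 := by linarith
        _ ≤ (Cc * r)^4 := hkey
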